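/- Let $h \in \mathbb{Z}$, $k \in \mathbb{N}$ with $\gcd(h,k) = 1$. Then the Dedekind sum satisfies $s(h,k) = \frac{1}{4k} \sum_{a=1}^{k-1} \cot(\pi a/k) \cot(\pi a h/k)$. -/

import Mathlib

open scoped Classical

/-- The sawtooth function `((x))`. -/
noncomputable def saw (x : ℝ) : ℝ :=
  if ∃ m : ℤ, x = m then 0 else Int.fract x - 1 / 2

/-- The cotangent function. -/
noncomputable def cot (x : ℝ) : ℝ := Real.cos x / Real.sin x

open Finset

lemma saw_intCast (m : ℤ) : saw m = 0 := by simp [saw]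

lemma saw_add_int (x : ℝ) (m : ℤ) : saw (x + m) = saw x := by
  unfold saw
  have h1 : (∃ n : ℤ, x + m = n) ↔ (∃ n : ℤ, x = n) := by
    constructor
    · rintro ⟨n, hn⟩; exact ⟨n - m, by push_cast; linarith⟩
    · rintro ⟨n, hn⟩; exact ⟨n + m, by push_cast; linarith⟩
  rw [Int.fract_add_intCast]
  simp [h1]

lemma saw_neg (x : ℝ) : saw (-x) = - saw x := by
  unfold saw
  by_cases hx : ∃ m : ℤ, x = m
  · have h2 : ∃ n : ℤ, -x = n := by
      obtain ⟨m, hm⟩ := hx; exact ⟨-m, by rw [hm]; push_cast; ring⟩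
    rw [if_pos hx, if_pos h2, neg_zero]
  · have h2 : ¬ ∃ m : ℤ, -x = m := by
      rintro ⟨m, hm⟩; exact hx ⟨-m, by push_cast; linarith⟩
    have hf : Int.fract x ≠ 0 := by
      intro hf
      exact hx ⟨⌊x⌋, by have := Int.fract_add_floor x; rw [hf] at this; linarith⟩
    simp only [hx, h2, if_false]
    rw [Int.fract_neg hf]; ring

lemma saw_eq (k b : ℕ) (hb0 : 0 < b) (hbk : b < k) : saw ((b : ℝ) / k) = b / k - 1 / 2 := by
  have hk : 0 < k := lt_trans hb0 hbk
  have h1 : (0:ℝ) < (b:ℝ)/k := by positivity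
  have h2 : (b:ℝ)/k < 1 := by
    rw [div_lt_one (by positivity)]; exact_mod_cast hbk
  have hni : ¬ ∃ m : ℤ, (b:ℝ)/k = m := by
    rintro ⟨m, hm⟩
    rw [hm] at h1 h2
    have : (0:ℤ) < m := by exact_mod_cast h1
    have : m < 1 := by exact_mod_cast h2
    omega
  rw [saw, if_neg hni, Int.fract_eq_self.2 ⟨le_of_lt h1, h2⟩]

lemma saw_int_congr (k : ℕ) (hk : 0 < k) {m n : ℤ} (h : (k:ℤ) ∣ m - n) :
    saw ((m : ℝ) / k) = saw ((n : ℝ) / k) := by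
  obtain ⟨t, ht⟩ := h
  have : (m : ℝ) / k = (n : ℝ) / k + t := by
    have hm : (m : ℝ) = n + k * t := by exact_mod_cast (by linarith [ht] : m = n + k * t)
    field_simp [hm]; linarith [hm]
  rw [this, saw_add_int]

lemma cot_eq_inv_tan (x : ℝ) : cot x = (Real.tan x)⁻¹ := by
  rw [cot, Real.tan_eq_sin_div_cos, inv_div]

lemma cot_int_congr (k : ℕ) (hk : 0 < k) {m n : ℤ} (h : (k:ℤ) ∣ m - n) :
    cot (Real.pi * m / k) = cot (Real.pi * n / k) := by
  obtain ⟨t, ht⟩ := h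
  have : Real.pi * m / k = Real.pi * n / k + t * Real.pi := by
    have hm : (m : ℝ) = n + k * t := by exact_mod_cast (by linarith [ht] : m = n + k * t)
    field_simp [hm]; linarith [hm]
  rw [this, cot_eq_inv_tan, cot_eq_inv_tan, Real.tan_periodic.int_mul t]

private noncomputable def zet (k : ℕ) : ℂ := Complex.exp (2 * Real.pi * Complex.I / k)

lemma zet_zpow (k : ℕ) (m : ℤ) : zet k ^ m = Complex.exp (((2 * Real.pi * m / k : ℝ) : ℂ) * Complex.I) := by
  rw [zet, ← Complex.exp_int_mul]
  congr 1
  push_cast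
  ring

lemma zet_zpow_re (k : ℕ) (m : ℤ) : (zet k ^ m).re = Real.cos (2 * Real.pi * m / k) := by
  rw [zet_zpow, Complex.exp_ofReal_mul_I_re]

lemma zet_zpow_im (k : ℕ) (m : ℤ) : (zet k ^ m).im = Real.sin (2 * Real.pi * m / k) := by
  rw [zet_zpow, Complex.exp_ofReal_mul_I_im]

lemma zet_zpow_eq_one_iff (k : ℕ) (hk : 0 < k) (m : ℤ) : zet k ^ m = 1 ↔ (k : ℤ) ∣ m :=
  (Complex.isPrimitiveRoot_exp k hk.ne').zpow_eq_one_iff_dvd m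

lemma zet_geom (k : ℕ) (hk : 0 < k) (m : ℤ) (hm : ¬ (k : ℤ) ∣ m) :
    ∑ a ∈ range k, (zet k ^ m) ^ a = 0 := by
  have h1 : zet k ^ m ≠ 1 := fun h => hm ((zet_zpow_eq_one_iff k hk m).1 h)
  rw [geom_sum_eq h1]
  have h2 : (zet k ^ m) ^ k = 1 := by
    rw [← zpow_natCast, ← zpow_mul, zet_zpow_eq_one_iff k hk]
    exact ⟨m, mul_comm m (k:ℤ)⟩
  rw [h2, sub_self, zero_div]

lemma sin_ne_zero (k : ℕ) (hk : 0 < k) (m : ℤ) (hm : ¬ (k : ℤ) ∣ m) :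
    Real.sin (Real.pi * m / k) ≠ 0 := by
  rw [Ne, Real.sin_eq_zero_iff]
  rintro ⟨n, hn⟩
  apply hm
  have hπ : Real.pi ≠ 0 := Real.pi_ne_zero
  have hkr : (k : ℝ) ≠ 0 := Nat.cast_ne_zero.2 hk.ne'
  have h2 : (n : ℝ) * k = m := by
    field_simp at hn
    apply mul_left_cancel₀ hπ
    rw [hn]
  exact ⟨n, by exact_mod_cast (by linarith [h2] : (m:ℝ) = k * n)⟩

lemma cos_sum (k : ℕ) (hk : 0 < k) (m : ℤ) :
    ∑ a ∈ range k, Real.cos (2 * Real.pi * m * a / k)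
      = if (k : ℤ) ∣ m then (k : ℝ) else 0 := by
  have hkr : (k : ℝ) ≠ 0 := Nat.cast_ne_zero.2 hk.ne'
  split_ifs with hd
  · obtain ⟨t, rfl⟩ := hd
    have h1 : ∀ a : ℕ, Real.cos (2 * Real.pi * (((k : ℤ) * t : ℤ) : ℝ) * a / k) = 1 := by
      intro a
      have h2 : 2 * Real.pi * (((k : ℤ) * t : ℤ) : ℝ) * a / k = ((t * a : ℤ) : ℝ) * (2 * Real.pi) := by
        push_cast
        field_simp
      rw [h2, Real.cos_int_mul_two_pi]
    simp only [h1, sum_const, card_range, nsmul_eq_mul, mul_one]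
  · have h0 := zet_geom k hk m hd
    have h1 := congrArg Complex.re h0
    rw [Complex.re_sum, Complex.zero_re] at h1
    rw [← h1]
    apply sum_congr rfl
    intro a _
    rw [← zpow_natCast, ← zpow_mul, zet_zpow_re]
    congr 1
    push_cast
    ring

lemma sin_sum (k : ℕ) (hk : 0 < k) (m : ℤ) (hm : ¬ (k : ℤ) ∣ m) :
    ∑ a ∈ range k, Real.sin (2 * Real.pi * m * a / k) = 0 := by
  have h0 := zet_geom k hk m hm
  have h1 := congrArg Complex.im h0
  rw [Complex.im_sum, Complex.zero_im] at h1
  rw [← h1]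
  apply sum_congr rfl
  intro a _
  rw [← zpow_natCast, ← zpow_mul, zet_zpow_im]
  congr 1
  push_cast
  ring


lemma key1 (k : ℕ) (z : ℂ) (hz1 : z ≠ 1) (hzk : z ^ k = 1) :
    (z - 1) * ∑ b ∈ range k, (b : ℂ) * z ^ b = k := by
  have hgeom : ∑ b ∈ range k, z ^ b = 0 := by
    rw [geom_sum_eq hz1, hzk, sub_self, zero_div]
  have h1 : ∀ b ∈ range k, (z - 1) * ((b : ℂ) * z ^ b)
      = ((((b : ℕ) + 1 : ℕ) : ℂ) * z ^ ((b : ℕ) + 1) - (b : ℂ) * z ^ b) - z * z ^ b := by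
    intro b _; push_cast; ring
  rw [mul_sum, sum_congr rfl h1, sum_sub_distrib,
    sum_range_sub (fun b => (b : ℂ) * z ^ b), ← mul_sum, hgeom, mul_zero, sub_zero, hzk]
  push_cast
  ring

lemma key2 (k : ℕ) (hk : 0 < k) (m : ℤ) (hm : ¬ (k : ℤ) ∣ m) :
    (zet k ^ m - 1) *
      (Complex.ofReal (-(1/2)) + Complex.ofReal (-(_root_.cot (Real.pi * m / k) / 2)) * Complex.I) = 1 := by
  set c := Real.cos (Real.pi * m / k) with hc
  set s := Real.sin (Real.pi * m / k) with hs
  have hsne : s ≠ 0 := sin_ne_zero k hk m hm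
  have hpyth : s ^ 2 + c ^ 2 = 1 := Real.sin_sq_add_cos_sq _
  have hre : (zet k ^ m).re = 2 * c ^ 2 - 1 := by
    rw [zet_zpow_re, hc, ← Real.cos_two_mul]
    congr 1; ring
  have him : (zet k ^ m).im = 2 * s * c := by
    rw [zet_zpow_im, hs, hc, ← Real.sin_two_mul]
    congr 1; ring
  have hz : zet k ^ m = Complex.ofReal (2 * c ^ 2 - 1) + Complex.ofReal (2 * s * c) * Complex.I := by
    rw [← Complex.re_add_im (zet k ^ m), hre, him]
  rw [hz, _root_.cot, ← hc, ← hs]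
  apply Complex.ext
  · simp only [Complex.mul_re, Complex.add_re, Complex.sub_re, Complex.one_re, Complex.ofReal_re,
      Complex.mul_im, Complex.add_im, Complex.sub_im, Complex.one_im, Complex.ofReal_im,
      Complex.I_re, Complex.I_im]
    field_simp
    ring_nf
  · simp only [Complex.mul_re, Complex.add_re, Complex.sub_re, Complex.one_re, Complex.ofReal_re,
      Complex.mul_im, Complex.add_im, Complex.sub_im, Complex.one_im, Complex.ofReal_im,
      Complex.I_re, Complex.I_im]
    field_simp
    linear_combination (-(2:ℝ)*c) * hpyth

lemma sin_weighted (k : ℕ) (hk : 0 < k) (m : ℤ) (hm : ¬ (k : ℤ) ∣ m) :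
    ∑ b ∈ range k, (b : ℝ) * Real.sin (2 * Real.pi * m * b / k)
      = -((k : ℝ) / 2) * _root_.cot (Real.pi * m / k) := by
  set z := zet k ^ m with hzdef
  have hz1 : z ≠ 1 := fun h => hm ((zet_zpow_eq_one_iff k hk m).1 h)
  have hzk : z ^ k = 1 := by
    rw [hzdef, ← zpow_natCast, ← zpow_mul, zet_zpow_eq_one_iff k hk]
    exact ⟨m, mul_comm m (k : ℤ)⟩
  set w := Complex.ofReal (-(1/2)) + Complex.ofReal (-(_root_.cot (Real.pi * m / k) / 2)) * Complex.I with hw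
  have hwinv : (z - 1) * w = 1 := key2 k hk m hm
  have hS : ∑ b ∈ range k, (b : ℂ) * z ^ b = (k : ℂ) * w := by
    have := key1 k z hz1 hzk
    calc ∑ b ∈ range k, (b : ℂ) * z ^ b
        = ((z - 1) * w) * ∑ b ∈ range k, (b : ℂ) * z ^ b := by rw [hwinv, one_mul]
      _ = ((z - 1) * ∑ b ∈ range k, (b : ℂ) * z ^ b) * w := by ring
      _ = (k : ℂ) * w := by rw [this]
  have him := congrArg Complex.im hS
  rw [Complex.im_sum] at him
  have hlhs : ∀ b ∈ range k, ((b : ℂ) * z ^ b).im = (b : ℝ) * Real.sin (2 * Real.pi * m * b / k) := by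
    intro b _
    rw [Complex.mul_im]
    have h2 : ((b : ℂ)).re = (b : ℝ) := by simp
    have h3 : ((b : ℂ)).im = 0 := by simp
    rw [h2, h3, hzdef, ← zpow_natCast, ← zpow_mul, zet_zpow_im]
    push_cast
    ring_nf
  rw [sum_congr rfl hlhs] at him
  rw [him]
  rw [hw]
  simp [Complex.mul_im, Complex.mul_re]
  ring

lemma dvd_small (k : ℕ) (hk : 0 < k) (m : ℤ) (h1 : -(k:ℤ) < m) (h2 : m < k)
    (hd : (k:ℤ) ∣ m) : m = 0 := by
  obtain ⟨t, rfl⟩ := hd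
  have hkz : (0:ℤ) < k := by exact_mod_cast hk
  rcases lt_trichotomy t 0 with h | h | h
  · nlinarith
  · simp [h]
  · nlinarith

lemma orth (k : ℕ) (hk : 0 < k) (b b' : ℕ) :
    ∑ a ∈ range k, Real.sin (2 * Real.pi * a * b / k) * Real.sin (2 * Real.pi * a * b' / k)
      = ((if (k : ℤ) ∣ ((b : ℤ) - b') then (k : ℝ) else 0)
          - (if (k : ℤ) ∣ ((b : ℤ) + b') then (k : ℝ) else 0)) / 2 := by
  have hterm : ∀ a ∈ range k,
      Real.sin (2 * Real.pi * a * b / k) * Real.sin (2 * Real.pi * a * b' / k)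
      = (Real.cos (2 * Real.pi * (((b : ℤ) - b' : ℤ) : ℝ) * a / k)
          - Real.cos (2 * Real.pi * (((b : ℤ) + b' : ℤ) : ℝ) * a / k)) / 2 := by
    intro a _
    have h1 : 2 * Real.pi * (((b : ℤ) - b' : ℤ) : ℝ) * a / k
        = 2 * Real.pi * a * b / k - 2 * Real.pi * a * b' / k := by push_cast; ring
    have h2 : 2 * Real.pi * (((b : ℤ) + b' : ℤ) : ℝ) * a / k
        = 2 * Real.pi * a * b / k + 2 * Real.pi * a * b' / k := by push_cast; ring
    rw [h1, h2, Real.cos_sub, Real.cos_add]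
    ring
  rw [sum_congr rfl hterm, ← sum_div, sum_sub_distrib, cos_sum k hk, cos_sum k hk]

lemma saw_compl (k b : ℕ) (hk : 0 < k) (hb : b < k) :
    saw (((k - b : ℕ) : ℝ) / k) = - saw ((b : ℝ) / k) := by
  rcases Nat.eq_zero_or_pos b with rfl | hb0
  · simp only [Nat.sub_zero, Nat.cast_zero, zero_div]
    rw [div_self (by positivity : (k:ℝ) ≠ 0)]
    have h1 : saw ((1:ℝ)) = 0 := by exact_mod_cast saw_intCast 1
    have h0 : saw ((0:ℝ)) = 0 := by exact_mod_cast saw_intCast 0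
    rw [h1, h0, neg_zero]
  · have hcast : ((k - b : ℕ) : ℝ) = (k : ℝ) - b := by
      have : b ≤ k := le_of_lt hb
      push_cast [this]; ring
    have harg : ((k - b : ℕ) : ℝ) / k = -((b:ℝ)/k) + ((1:ℤ):ℝ) := by
      rw [hcast]; field_simp; ring
    rw [harg, saw_add_int, saw_neg]

lemma inversion (k : ℕ) (hk : 0 < k) (b : ℕ) (hb : b < k) :
    ∑ a ∈ range k, (∑ c ∈ range k, saw ((c : ℝ) / k) * Real.sin (2 * Real.pi * a * c / k))
        * Real.sin (2 * Real.pi * a * b / k)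
      = k * saw ((b : ℝ) / k) := by
  have hswap : ∑ a ∈ range k, (∑ c ∈ range k, saw ((c : ℝ) / k) * Real.sin (2 * Real.pi * a * c / k))
        * Real.sin (2 * Real.pi * a * b / k)
      = ∑ c ∈ range k, saw ((c : ℝ) / k) *
          ∑ a ∈ range k, Real.sin (2 * Real.pi * a * c / k) * Real.sin (2 * Real.pi * a * b / k) := by
    calc ∑ a ∈ range k, (∑ c ∈ range k, saw ((c : ℝ) / k) * Real.sin (2 * Real.pi * a * c / k))
          * Real.sin (2 * Real.pi * a * b / k)
        = ∑ a ∈ range k, ∑ c ∈ range k,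
            saw ((c : ℝ) / k) * Real.sin (2 * Real.pi * a * c / k) * Real.sin (2 * Real.pi * a * b / k) := by
          apply sum_congr rfl; intro a _; rw [sum_mul]
      _ = ∑ c ∈ range k, ∑ a ∈ range k,
            saw ((c : ℝ) / k) * Real.sin (2 * Real.pi * a * c / k) * Real.sin (2 * Real.pi * a * b / k) :=
          Finset.sum_comm
      _ = ∑ c ∈ range k, saw ((c : ℝ) / k) *
            ∑ a ∈ range k, Real.sin (2 * Real.pi * a * c / k) * Real.sin (2 * Real.pi * a * b / k) := by
          apply sum_congr rfl; intro c _; rw [mul_sum]; apply sum_congr rfl; intro a _; ring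
  rw [hswap]
  set b₂ := (k - b) % k with hb₂
  have hb₂lt : b₂ < k := Nat.mod_lt _ hk
  have hsawb₂ : saw ((b₂ : ℝ) / k) = - saw ((b : ℝ) / k) := by
    rcases Nat.eq_zero_or_pos b with rfl | hb0
    · have hb2 : b₂ = 0 := by simp [hb₂]
      rw [hb2]
      simp only [Nat.cast_zero, zero_div]
      have h0 : saw (0:ℝ) = 0 := by exact_mod_cast saw_intCast 0
      rw [h0]; ring
    · have : b₂ = k - b := Nat.mod_eq_of_lt (by omega)
      rw [this, saw_compl k b hk hb]
  have hterm : ∀ c ∈ range k, saw ((c : ℝ) / k) *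
        ∑ a ∈ range k, Real.sin (2 * Real.pi * a * c / k) * Real.sin (2 * Real.pi * a * b / k)
      = (if c = b then (k : ℝ) / 2 * saw ((b:ℝ)/k) else 0)
        + (if c = b₂ then (k : ℝ) / 2 * (- saw ((b₂:ℝ)/k)) else 0) := by
    intro c hc
    rw [mem_range] at hc
    rw [orth k hk c b]
    have hd1 : (k : ℤ) ∣ ((c : ℤ) - b) ↔ c = b := by
      constructor
      · intro hd
        have := dvd_small k hk _ (by omega) (by omega) hd
        omega
      · rintro rfl; simp
    have hd2 : (k : ℤ) ∣ ((c : ℤ) + b) ↔ c = b₂ := by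
      constructor
      · intro hd
        obtain ⟨t, ht⟩ := hd
        have hkz : (0:ℤ) < k := by exact_mod_cast hk
        have ht0 : 0 ≤ t := by nlinarith
        have ht1 : t ≤ 1 := by nlinarith
        interval_cases t
        · have hc0 : c = 0 ∧ b = 0 := by omega
          rw [hc0.1, hb₂, hc0.2]; simp
        · have hcb : c = k - b := by omega
          rw [hcb, hb₂, Nat.mod_eq_of_lt (by omega)]
      · rintro rfl
        rcases Nat.eq_zero_or_pos b with hb0 | hb0
        · subst hb0; simp [hb₂]
        · have hbb : b₂ = k - b := Nat.mod_eq_of_lt (by omega)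
          refine ⟨1, ?_⟩
          rw [hbb]
          push_cast [le_of_lt hb]
          ring
    have e1 : (if (k : ℤ) ∣ ((c : ℤ) - b) then (k:ℝ) else 0) = if c = b then (k:ℝ) else 0 :=
      if_congr hd1 rfl rfl
    have e2 : (if (k : ℤ) ∣ ((c : ℤ) + b) then (k:ℝ) else 0) = if c = b₂ then (k:ℝ) else 0 :=
      if_congr hd2 rfl rfl
    rw [e1, e2]
    by_cases h1 : c = b <;> by_cases h2 : c = b₂
    · rw [if_pos h1, if_pos h2, if_pos h1, if_pos h2]
      subst h1
      rw [← h2]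
      ring
    · rw [if_pos h1, if_neg h2, if_pos h1, if_neg h2]
      subst h1; ring
    · rw [if_neg h1, if_pos h2, if_neg h1, if_pos h2]
      rw [← h2]
      ring
    · rw [if_neg h1, if_neg h2, if_neg h1, if_neg h2]
      ring
  rw [sum_congr rfl hterm, sum_add_distrib, sum_ite_eq' (range k) b,
    sum_ite_eq' (range k) b₂, if_pos (mem_range.2 hb), if_pos (mem_range.2 hb₂lt), hsawb₂]
  ring

lemma sin_int_congr (k : ℕ) (hk : 0 < k) {m n : ℤ} (hd : (k:ℤ) ∣ m - n) :
    Real.sin (2 * Real.pi * m / k) = Real.sin (2 * Real.pi * n / k) := by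
  obtain ⟨t, ht⟩ := hd
  have hkr : (k : ℝ) ≠ 0 := Nat.cast_ne_zero.2 hk.ne'
  have harg : 2 * Real.pi * m / k = 2 * Real.pi * n / k + t * (2 * Real.pi) := by
    have hm : (m : ℝ) = n + k * t := by exact_mod_cast (by linarith [ht] : m = n + k * t)
    field_simp [hm]; linarith [hm]
  rw [harg, Real.sin_add_int_mul_two_pi]

lemma Flem (k : ℕ) (hk : 0 < k) (m : ℤ) (hm : ¬ (k : ℤ) ∣ m) :
    ∑ b ∈ range k, saw ((b : ℝ) / k) * Real.sin (2 * Real.pi * m * b / k)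
      = -(1/2) * cot (Real.pi * m / k) := by
  have hkr : (k : ℝ) ≠ 0 := Nat.cast_ne_zero.2 hk.ne'
  have hterm : ∀ b ∈ range k, saw ((b : ℝ) / k) * Real.sin (2 * Real.pi * m * b / k)
      = (b : ℝ) * Real.sin (2 * Real.pi * m * b / k) * (1 / k)
        - (1/2) * Real.sin (2 * Real.pi * m * b / k) := by
    intro b hb
    rcases Nat.eq_zero_or_pos b with rfl | hb0
    · simp
    · rw [saw_eq k b hb0 (mem_range.1 hb)]
      ring
  rw [sum_congr rfl hterm, sum_sub_distrib, ← sum_mul, ← mul_sum,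
    sin_weighted k hk m hm, sin_sum k hk m hm]
  field_simp
  ring

lemma mulmod_inv (k : ℕ) (hk : 0 < k) (u v : ℕ) (huv : (u * v) % k = 1 % k)
    (b : ℕ) (hb : b < k) : ((b * u) % k * v) % k = b := by
  have h1 : ((b * u) % k * v) % k = (b * (u * v)) % k := by
    rw [Nat.mod_mul_mod, mul_assoc]
  have h2 : (b * (u * v)) % k = (b * 1) % k := Nat.ModEq.mul_left b huv
  rw [h1, h2, mul_one, Nat.mod_eq_of_lt hb]

lemma sum_reindex (k : ℕ) (hk : 0 < k) (c c' : ℕ) (hcc : (c * c') % k = 1 % k)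
    (f : ℕ → ℝ) :
    ∑ b ∈ range k, f ((b * c) % k) = ∑ b ∈ range k, f b := by
  have key : ∀ (u v : ℕ), (u * v) % k = 1 % k → ∀ b < k, ((b * u) % k * v) % k = b :=
    fun u v huv b hb => mulmod_inv k hk u v huv b hb
  have hcc' : (c' * c) % k = 1 % k := by rw [mul_comm]; exact hcc
  apply Finset.sum_nbij' (i := fun b => (b * c) % k) (j := fun b => (b * c') % k)
  · intro a _; exact mem_range.2 (Nat.mod_lt _ hk)
  · intro a _; exact mem_range.2 (Nat.mod_lt _ hk)
  · intro a ha; exact key c c' hcc a (mem_range.1 ha)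
  · intro a ha; exact key c' c hcc' a (mem_range.1 ha)
  · intro a _; rfl

lemma natmod_dvd (k m : ℕ) : (k : ℤ) ∣ ((m % k : ℕ) : ℤ) - (m : ℤ) := by
  refine ⟨-((m:ℤ) / k), ?_⟩
  rw [Int.natCast_mod, Int.emod_def]
  ring

lemma Glem (k : ℕ) (hk : 0 < k) (h : ℤ) (h' hn : ℕ)
    (d1 : (k:ℤ) ∣ (h':ℤ) * h - 1) (hcc : (h' * hn) % k = 1 % k)
    (a : ℕ) (ha : ¬ (k:ℤ) ∣ (a:ℤ)) :
    ∑ b ∈ range k, saw ((b:ℝ) * (h:ℝ) / k) * Real.sin (2 * Real.pi * a * b / k)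
      = -(1/2) * cot (Real.pi * ((a * h' : ℕ):ℝ) / k) := by
  set f : ℕ → ℝ := fun n => saw ((((n:ℤ) * h : ℤ) : ℝ) / k) * Real.sin (2 * Real.pi * a * n / k)
    with hf
  have step1 : ∑ b ∈ range k, saw ((b:ℝ) * (h:ℝ) / k) * Real.sin (2 * Real.pi * a * b / k)
      = ∑ b ∈ range k, f b := by
    apply sum_congr rfl
    intro b _
    simp only [hf]
    congr 2
    push_cast
    ring
  have step2 : ∑ b ∈ range k, f b = ∑ b ∈ range k, f ((b * h') % k) :=
    (sum_reindex k hk h' hn hcc f).symm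
  have hm' : ¬ (k:ℤ) ∣ ((a * h' : ℕ) : ℤ) := by
    intro hd
    apply ha
    have e : (a:ℤ) = ((a * h' : ℕ):ℤ) * h - (a:ℤ) * ((h':ℤ) * h - 1) := by push_cast; ring
    rw [e]
    exact dvd_sub (Dvd.dvd.mul_right hd h) (Dvd.dvd.mul_left d1 _)
  have step3 : ∀ b ∈ range k, f ((b * h') % k)
      = saw ((((b:ℤ)):ℝ) / k) * Real.sin (2 * Real.pi * ((a * h' : ℕ):ℤ) * b / k) := by
    intro b _
    simp only [hf]
    have dmod : (k:ℤ) ∣ (((b * h') % k : ℕ) : ℤ) - ((b * h' : ℕ) : ℤ) := natmod_dvd k _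
    have hsaw : saw ((((((b * h') % k : ℕ):ℤ) * h : ℤ) : ℝ) / (k:ℝ)) = saw (((b:ℤ):ℝ) / k) := by
      apply saw_int_congr k hk
      have e : ((((b * h') % k : ℕ):ℤ) * h : ℤ) - (b:ℤ)
          = ((((b * h') % k : ℕ):ℤ) - ((b * h' : ℕ):ℤ)) * h + (b:ℤ) * ((h':ℤ) * h - 1) := by
        push_cast; ring
      rw [e]
      exact dvd_add (Dvd.dvd.mul_right dmod h) (Dvd.dvd.mul_left d1 _)
    have hsin : Real.sin (2 * Real.pi * a * (((b * h') % k : ℕ):ℝ) / k)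
        = Real.sin (2 * Real.pi * ((a * h' : ℕ):ℤ) * b / k) := by
      have e1 : (2 : ℝ) * Real.pi * a * (((b * h') % k : ℕ):ℝ) / k
          = 2 * Real.pi * (((a * ((b * h') % k) : ℕ) : ℤ) : ℝ) / k := by
        rw [show (((b * h') % k : ℕ):ℝ) = ((((b * h') % k : ℕ):ℤ):ℝ) by norm_cast]
        push_cast; ring
      have e2 : (2 : ℝ) * Real.pi * (((a * h' : ℕ):ℤ):ℝ) * b / k
          = 2 * Real.pi * (((a * h' * b : ℕ) : ℤ) : ℝ) / k := by
        push_cast; ring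
      rw [e1, e2]
      apply sin_int_congr k hk
      have e : ((a * ((b * h') % k) : ℕ) : ℤ) - ((a * h' * b : ℕ) : ℤ)
          = (a : ℤ) * ((((b * h') % k : ℕ):ℤ) - ((b * h' : ℕ):ℤ)) := by
        push_cast; ring
      rw [e]
      exact Dvd.dvd.mul_left dmod _
    rw [hsaw, hsin]
  have step4 : ∑ b ∈ range k, saw ((((b:ℤ)):ℝ) / k)
        * Real.sin (2 * Real.pi * ((a * h' : ℕ):ℤ) * b / k)
      = -(1/2) * cot (Real.pi * ((a * h' : ℕ):ℤ) / k) := by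
    have := Flem k hk ((a * h' : ℕ) : ℤ) hm'
    rw [← this]
    apply sum_congr rfl
    intro b _
    push_cast
    ring
  rw [step1, step2, sum_congr rfl step3]
  rw [step4]
  try norm_cast

noncomputable def Fsum (k a : ℕ) : ℝ :=
  ∑ c ∈ range k, saw ((c : ℝ) / k) * Real.sin (2 * Real.pi * a * c / k)

noncomputable def Gsum (k : ℕ) (h : ℤ) (a : ℕ) : ℝ :=
  ∑ b ∈ range k, saw ((b : ℝ) * (h : ℝ) / k) * Real.sin (2 * Real.pi * a * b / k)

lemma Fsum_zero (k : ℕ) : Fsum k 0 = 0 := by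
  unfold Fsum
  apply Finset.sum_eq_zero
  intro c _
  simp

lemma Fsum_eq (k : ℕ) (hk : 0 < k) (a : ℕ) (ha : ¬ (k:ℤ) ∣ (a:ℤ)) :
    Fsum k a = -(1/2) * cot (Real.pi * a / k) := by
  unfold Fsum
  have := Flem k hk (a : ℤ) ha
  have e1 : ∀ c ∈ range k, saw ((c : ℝ) / k) * Real.sin (2 * Real.pi * (a:ℝ) * c / k)
      = saw ((c : ℝ) / k) * Real.sin (2 * Real.pi * (((a:ℤ)):ℝ) * c / k) := by
    intro c _; norm_cast
  rw [sum_congr rfl e1, this]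
  norm_cast

lemma dedekind_sum_eq (k : ℕ) (hk : 0 < k) (h : ℤ) :
    ∑ b ∈ range k, saw ((b : ℝ) / k) * saw ((b:ℝ) * (h : ℝ) / k)
      = (1 / k) * ∑ a ∈ range k, Fsum k a * Gsum k h a := by
  have hkr : (k : ℝ) ≠ 0 := Nat.cast_ne_zero.2 hk.ne'
  have hinv : ∀ b ∈ range k, saw ((b : ℝ) / k)
      = (1 / k) * ∑ a ∈ range k, Fsum k a * Real.sin (2 * Real.pi * a * b / k) := by
    intro b hb
    have := inversion k hk b (mem_range.1 hb)
    rw [show (∑ a ∈ range k, (∑ c ∈ range k, saw ((c : ℝ) / k)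
          * Real.sin (2 * Real.pi * a * c / k)) * Real.sin (2 * Real.pi * a * b / k))
        = ∑ a ∈ range k, Fsum k a * Real.sin (2 * Real.pi * a * b / k) from rfl] at this
    rw [this]
    field_simp
  calc ∑ b ∈ range k, saw ((b : ℝ) / k) * saw ((b:ℝ) * (h : ℝ) / k)
      = ∑ b ∈ range k, ((1 / k) * ∑ a ∈ range k, Fsum k a * Real.sin (2 * Real.pi * a * b / k))
          * saw ((b:ℝ) * (h : ℝ) / k) := by
        apply sum_congr rfl; intro b hb; rw [← hinv b hb]
    _ = ∑ b ∈ range k, ∑ a ∈ range k,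
          (1 / k) * (Fsum k a * (saw ((b:ℝ) * (h : ℝ) / k) * Real.sin (2 * Real.pi * a * b / k))) := by
        apply sum_congr rfl; intro b _
        rw [mul_comm, mul_sum, mul_sum]
        apply sum_congr rfl; intro a _; ring
    _ = ∑ a ∈ range k, ∑ b ∈ range k,
          (1 / k) * (Fsum k a * (saw ((b:ℝ) * (h : ℝ) / k) * Real.sin (2 * Real.pi * a * b / k))) :=
        Finset.sum_comm
    _ = (1 / k) * ∑ a ∈ range k, Fsum k a * Gsum k h a := by
        rw [Finset.mul_sum]
        apply sum_congr rfl; intro a _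
        unfold Gsum
        rw [Finset.mul_sum, Finset.mul_sum]

theorem dedekind_cot (h : ℤ) (k : ℕ) (hk : 0 < k) (hco : Int.gcd h k = 1) :
    ∑ a ∈ Finset.range k, saw ((a : ℝ) / k) * saw (a * (h : ℝ) / k)
      = 1 / (4 * k) *
          ∑ a ∈ Finset.Icc 1 (k - 1), cot (Real.pi * a / k) * cot (Real.pi * a * (h : ℝ) / k) := by
  have hkr : (k : ℝ) ≠ 0 := Nat.cast_ne_zero.2 hk.ne'
  have hkz : (k : ℤ) ≠ 0 := Int.natCast_ne_zero.2 hk.ne'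
  have hkzpos : (0:ℤ) < k := by exact_mod_cast hk
  -- Bezout
  have hIC : IsCoprime (h:ℤ) (k:ℤ) := Int.isCoprime_iff_gcd_eq_one.mpr hco
  obtain ⟨u, v, huv⟩ := hIC
  set h' : ℕ := (u % k).toNat with hh'def
  set hn : ℕ := (h % k).toNat with hhndef
  have hh' : ((h':ℕ):ℤ) = u % k := Int.toNat_of_nonneg (Int.emod_nonneg u hkz)
  have hhn : ((hn:ℕ):ℤ) = h % k := Int.toNat_of_nonneg (Int.emod_nonneg h hkz)
  have du : (k:ℤ) ∣ u - h' := ⟨u / k, by rw [hh', Int.emod_def]; ring⟩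
  have dh : (k:ℤ) ∣ h - hn := ⟨h / k, by rw [hhn, Int.emod_def]; ring⟩
  have duh : (k:ℤ) ∣ u * h - 1 := ⟨-v, by linarith⟩
  have d1 : (k:ℤ) ∣ (h':ℤ) * h - 1 := by
    have e : (h':ℤ) * h - 1 = -((u - h') * h) + (u * h - 1) := by ring
    rw [e]; exact dvd_add (dvd_neg.2 (Dvd.dvd.mul_right du h)) duh
  have dnh : (k:ℤ) ∣ (h':ℤ) * hn - 1 := by
    have e : (h':ℤ) * hn - 1 = -((h':ℤ) * (h - hn)) + ((h':ℤ) * h - 1) := by ring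
    rw [e]; exact dvd_add (dvd_neg.2 (Dvd.dvd.mul_left dh _)) d1
  have hcc : (h' * hn) % k = 1 % k := by
    have hmod : ((h' * hn : ℕ):ℤ) ≡ ((1:ℕ):ℤ) [ZMOD (k:ℤ)] := by
      rw [Int.modEq_iff_dvd]
      have e : ((1:ℕ):ℤ) - ((h' * hn : ℕ):ℤ) = -((h':ℤ) * hn - 1) := by push_cast; ring
      rw [e]
      exact dvd_neg.2 dnh
    exact Int.natCast_modEq_iff.mp hmod
  have hcc2 : (hn * h') % k = 1 % k := by rw [Nat.mul_comm]; exact hcc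
  have dnh2 : (k:ℤ) ∣ (hn:ℤ) * h' - 1 := by
    have e : (hn:ℤ) * h' - 1 = (h':ℤ) * hn - 1 := by ring
    rw [e]; exact dnh
  have hnh : (k:ℤ) ∣ (hn:ℤ) - h := dvd_sub_comm.mp dh
  have hndvd : ∀ a : ℕ, 1 ≤ a → a ≤ k - 1 → ¬ (k:ℤ) ∣ (a:ℤ) := by
    intro a h1 h2 hd
    have : (k:ℤ) ≤ (a:ℤ) := Int.le_of_dvd (by exact_mod_cast h1) hd
    omega
  have hsplit : Finset.range k = insert 0 (Finset.Icc 1 (k-1)) := by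
    ext x; simp only [mem_range, mem_insert, mem_Icc]; omega
  have hFG : ∀ a ∈ Finset.Icc 1 (k-1), Fsum k a * Gsum k h a
      = (1/4) * (cot (Real.pi * a / k) * cot (Real.pi * ((a * h' : ℕ):ℝ) / k)) := by
    intro a ha
    rw [mem_Icc] at ha
    have hda := hndvd a ha.1 ha.2
    have hG : Gsum k h a = -(1/2) * cot (Real.pi * ((a * h' : ℕ):ℝ) / k) :=
      Glem k hk h h' hn d1 hcc a hda
    rw [Fsum_eq k hk a hda, hG]
    ring
  have hM4 : ∑ a ∈ Finset.Icc 1 (k-1), cot (Real.pi * a / k) * cot (Real.pi * a * (h:ℝ) / k)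
      = ∑ a ∈ Finset.Icc 1 (k-1), cot (Real.pi * a / k) * cot (Real.pi * ((a * h' : ℕ):ℝ) / k) := by
    apply Finset.sum_nbij' (i := fun a => (a * hn) % k) (j := fun a => (a * h') % k)
    · intro a ha
      rw [mem_Icc] at ha ⊢
      have hlt : (a * hn) % k < k := Nat.mod_lt _ hk
      constructor
      · by_contra hlt1
        have h0 : (a * hn) % k = 0 := by omega
        have hiv := mulmod_inv k hk hn h' hcc2 a (by omega)
        rw [h0] at hiv
        simp at hiv
        omega
      · omega
    · intro a ha
      rw [mem_Icc] at ha ⊢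
      have hlt : (a * h') % k < k := Nat.mod_lt _ hk
      constructor
      · by_contra hlt1
        have h0 : (a * h') % k = 0 := by omega
        have hiv := mulmod_inv k hk h' hn hcc a (by omega)
        rw [h0] at hiv
        simp at hiv
        omega
      · omega
    · intro a ha
      rw [mem_Icc] at ha
      exact mulmod_inv k hk hn h' hcc2 a (by omega)
    · intro a ha
      rw [mem_Icc] at ha
      exact mulmod_inv k hk h' hn hcc a (by omega)
    · intro a ha
      rw [mem_Icc] at ha
      have c1 : cot (Real.pi * (((a * hn) % k : ℕ):ℝ) / k) = cot (Real.pi * a * (h:ℝ) / k) := by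
        have e1 : Real.pi * (((a * hn) % k : ℕ):ℝ) / k
            = Real.pi * ((((a * hn) % k : ℕ):ℤ):ℝ) / k := by norm_cast
        have e2 : Real.pi * (a:ℝ) * (h:ℝ) / k = Real.pi * ((((a:ℤ) * h : ℤ)):ℝ) / k := by
          push_cast; ring
        rw [e1, e2]
        apply cot_int_congr k hk
        have e : (((a * hn) % k : ℕ):ℤ) - (a:ℤ) * h
            = ((((a * hn) % k : ℕ):ℤ) - ((a * hn : ℕ):ℤ)) + (a:ℤ) * ((hn:ℤ) - h) := by
          push_cast; ring
        rw [e]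
        exact dvd_add (natmod_dvd k _) (Dvd.dvd.mul_left hnh a)
      have c2 : cot (Real.pi * ((((a * hn) % k) * h' : ℕ):ℝ) / k) = cot (Real.pi * (a:ℝ) / k) := by
        have e1 : Real.pi * ((((a * hn) % k) * h' : ℕ):ℝ) / k
            = Real.pi * (((((a * hn) % k) * h' : ℕ):ℤ):ℝ) / k := by norm_cast
        have e2 : Real.pi * (a:ℝ) / k = Real.pi * (((a:ℤ)):ℝ) / k := by norm_cast
        rw [e1, e2]
        apply cot_int_congr k hk
        have e : ((((a * hn) % k) * h' : ℕ):ℤ) - (a:ℤ)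
            = ((((a * hn) % k : ℕ):ℤ) - ((a * hn : ℕ):ℤ)) * h' + (a:ℤ) * ((hn:ℤ) * h' - 1) := by
          push_cast; ring
        rw [e]
        exact dvd_add (Dvd.dvd.mul_right (natmod_dvd k _) _) (Dvd.dvd.mul_left dnh2 a)
      rw [c1, c2]
      ring
  rw [dedekind_sum_eq k hk h, hM4, hsplit, sum_insert (by simp)]
  have hz : Fsum k 0 * Gsum k h 0 = 0 := by rw [Fsum_zero]; ring
  rw [hz, zero_add, sum_congr rfl hFG, ← Finset.mul_sum]
  ring
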